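/- Let 1 ≤ γ < 3 and ρ₋ > ρ₊ > 0, with Q and z defined as above. Then z is strictly increasing on (ρ₋, ∞) with z(ρ₋) = 0 and z(ρ₁) → ∞ as ρ₁ → ∞; hence for every B > 0 the equation z(ρ₁) = B has a unique solution ρ̄ > ρ₋. -/

import Mathlib

open Filter Topology

theorem aux18 (ρm ρp : ℝ) (hρ : ρp < ρm) (hρp : 0 < ρp)
    (Q q' q'' : ℝ → ℝ)
    (hQd : ∀ x : ℝ, 0 < x → HasDerivAt Q (q' x) x)
    (hq'd : ∀ x : ℝ, 0 < x → HasDerivAt q' (q'' x) x)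
    (hq'' : ∀ x : ℝ, 0 < x → 0 ≤ q'' x)
    (hmono : StrictMonoOn q' (Set.Ioi 0))
    (z : ℝ → ℝ)
    (hz : ∀ ρ₁ : ℝ, z ρ₁ =
      2 * (deriv Q ρ₁ - (Q ρm - Q ρp) / (ρm - ρp)) * (ρ₁ - ρm) * (ρ₁ - ρp) -
      (2 * ρ₁ - ρm - ρp) *
        (Q ρ₁ - ρ₁ * ((Q ρm - Q ρp) / (ρm - ρp)) + (ρp * Q ρm - ρm * Q ρp) / (ρm - ρp))) :
    StrictMonoOn z (Set.Ici ρm) ∧ z ρm = 0 ∧ Tendsto z atTop atTop ∧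
    (∀ B : ℝ, 0 < B → ∃! ρbar : ℝ, ρm < ρbar ∧ z ρbar = B) := by
  have hρm : 0 < ρm := hρp.trans hρ
  have hsub : (0:ℝ) < ρm - ρp := by linarith
  set s : ℝ := (Q ρm - Q ρp) / (ρm - ρp) with hs
  set c : ℝ := (ρp * Q ρm - ρm * Q ρp) / (ρm - ρp) with hc
  set Z : ℝ → ℝ := fun ρ => 2 * (q' ρ - s) * (ρ - ρm) * (ρ - ρp) -
      (2 * ρ - ρm - ρp) * (Q ρ - ρ * s + c) with hZ
  have hzZ : ∀ x : ℝ, 0 < x → z x = Z x := by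
    intro x hx
    rw [hz x, (hQd x hx).deriv]
  have hWm : Q ρm - ρm * s + c = 0 := by
    rw [hs, hc]
    field_simp
    ring
  -- MVT giving a point where q' equals the slope s
  obtain ⟨ξ, hξmem, hξ⟩ := exists_hasDerivAt_eq_slope Q q' hρ
    (fun x hx => ((hQd x (lt_of_lt_of_le hρp hx.1)).continuousAt).continuousWithinAt)
    (fun x hx => hQd x (hρp.trans hx.1))
  have hξs : q' ξ = s := hξ
  have hw'pos : ∀ x : ℝ, ρm ≤ x → 0 < q' x - s := by
    intro x hx
    have h1 : q' ξ < q' x :=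
      hmono (Set.mem_Ioi.2 (hρp.trans hξmem.1)) (Set.mem_Ioi.2 (lt_of_lt_of_le hρm hx))
        (lt_of_lt_of_le hξmem.2 hx)
    rw [hξs] at h1; linarith
  have hw'mono : ∀ x : ℝ, ρm ≤ x → q' ρm ≤ q' x := by
    intro x hx
    rcases eq_or_lt_of_le hx with h | h
    · rw [h]
    · exact le_of_lt (hmono (Set.mem_Ioi.2 hρm) (Set.mem_Ioi.2 (hρm.trans h)) h)
  -- derivative of W
  have hWd : ∀ x : ℝ, 0 < x → HasDerivAt (fun t => Q t - t * s + c) (q' x - s) x := by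
    intro x hx
    have h := ((hQd x hx).sub ((hasDerivAt_id x).mul_const s)).add_const c
    simpa using h
  -- bound on W
  have hW : ∀ x : ℝ, ρm ≤ x → Q x - x * s + c ≤ (q' x - s) * (x - ρm) := by
    intro x hx
    rcases eq_or_lt_of_le hx with h | h
    · rw [← h, hWm]; simp
    · obtain ⟨η, hηmem, hη⟩ := exists_hasDerivAt_eq_slope (fun t => Q t - t * s + c)
        (fun t => q' t - s) h
        (fun t ht => (((hWd t (lt_of_lt_of_le hρm ht.1)).continuousAt)).continuousWithinAt)
        (fun t ht => hWd t (hρm.trans ht.1))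
      rw [hWm] at hη
      have hxm : (0:ℝ) < x - ρm := by linarith
      have h2 : Q x - x * s + c = (q' η - s) * (x - ρm) := by
        field_simp at hη
        linarith [hη]
      have h3 : q' η ≤ q' x :=
        le_of_lt (hmono (Set.mem_Ioi.2 (hρm.trans hηmem.1))
          (Set.mem_Ioi.2 (hρm.trans h)) hηmem.2)
      rw [h2]
      nlinarith
  -- derivative of Z
  have hZd : ∀ x : ℝ, 0 < x → HasDerivAt Z
      (2 * q'' x * ((x - ρm) * (x - ρp)) + (q' x - s) * (ρm - ρp)
        + 2 * ((q' x - s) * (x - ρm) - (Q x - x * s + c))) x := by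
    intro x hx
    have h1 : HasDerivAt (fun y => 2 * (q' y - s) * (y - ρm) * (y - ρp))
        ((2 * q'' x * (x - ρm) + 2 * (q' x - s) * 1) * (x - ρp)
          + 2 * (q' x - s) * (x - ρm) * 1) x :=
      ((((hq'd x hx).sub_const s).const_mul 2).mul
        ((hasDerivAt_id x).sub_const ρm)).mul ((hasDerivAt_id x).sub_const ρp)
    have h2 : HasDerivAt (fun y => (2 * y - ρm - ρp) * (Q y - y * s + c))
        ((2 * 1) * (Q x - x * s + c) + (2 * x - ρm - ρp) * (q' x - s)) x := by
      have ha : HasDerivAt (fun y : ℝ => 2 * y - ρm - ρp) (2 * 1) x := by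
        simpa using (((hasDerivAt_id x).const_mul 2).sub_const ρm).sub_const ρp
      exact ha.mul (hWd x hx)
    have h3 := h1.sub h2
    exact h3.congr_deriv (by ring)
  -- z agrees with Z near positive points
  have hzev : ∀ x : ℝ, 0 < x → z =ᶠ[𝓝 x] Z := by
    intro x hx
    filter_upwards [eventually_gt_nhds hx] with y hy using hzZ y hy
  -- continuity of z on Ici ρm
  have hcont : ContinuousOn z (Set.Ici ρm) := by
    intro x hx
    have h0 : 0 < x := lt_of_lt_of_le hρm hx
    exact ((hZd x h0).continuousAt.congr (hzev x h0).symm).continuousWithinAt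
  -- strict monotonicity
  have hmonoz : StrictMonoOn z (Set.Ici ρm) := by
    apply strictMonoOn_of_deriv_pos (convex_Ici ρm) hcont
    intro x hx
    rw [interior_Ici] at hx
    have hx' : ρm < x := hx
    have h0 : 0 < x := hρm.trans hx'
    rw [(hzev x h0).deriv_eq, (hZd x h0).deriv]
    have hP : 0 ≤ (x - ρm) * (x - ρp) := by nlinarith
    have h1 : 0 ≤ 2 * q'' x * ((x - ρm) * (x - ρp)) := by
      have := hq'' x h0
      positivity
    have h2 : 0 < (q' x - s) * (ρm - ρp) :=
      mul_pos (hw'pos x hx'.le) hsub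
    have h3 : 0 ≤ 2 * ((q' x - s) * (x - ρm) - (Q x - x * s + c)) := by
      have := hW x hx'.le
      linarith
    linarith
  -- value at ρm
  have hzm : z ρm = 0 := by
    rw [hzZ ρm hρm, hZ]
    simp only
    rw [hWm]
    ring
  -- linear lower bound
  have hlin : ∀ x : ℝ, ρm ≤ x → (q' ρm - s) * (ρm - ρp) * (x - ρm) ≤ z x := by
    intro x hx
    rw [hzZ x (lt_of_lt_of_le hρm hx), hZ]
    simp only
    have hWx := hW x hx
    have hw'm := hw'mono x hx
    have hw'p := hw'pos x hx
    have hxm : 0 ≤ x - ρm := by linarith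
    have hxp : 0 ≤ x - ρp := by linarith
    have hP' : 0 ≤ 2 * x - ρm - ρp := by linarith
    have hb1 : (2 * x - ρm - ρp) * (Q x - x * s + c) ≤
        (2 * x - ρm - ρp) * ((q' x - s) * (x - ρm)) :=
      mul_le_mul_of_nonneg_left hWx hP'
    have hb2 : (q' ρm - s) * ((ρm - ρp) * (x - ρm)) ≤
        (q' x - s) * ((ρm - ρp) * (x - ρm)) := by
      apply mul_le_mul_of_nonneg_right (by linarith) (by positivity)
    nlinarith
  -- tendsto atTop
  have hk : 0 < (q' ρm - s) * (ρm - ρp) := mul_pos (hw'pos ρm le_rfl) hsub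
  have htop : Tendsto z atTop atTop := by
    have hlb : Tendsto (fun x => (q' ρm - s) * (ρm - ρp) * (x - ρm)) atTop atTop :=
      (tendsto_atTop_add_const_right atTop (-ρm) tendsto_id).const_mul_atTop hk
    refine tendsto_atTop_mono' atTop ?_ hlb
    filter_upwards [eventually_ge_atTop ρm] with x hx using hlin x hx
  refine ⟨hmonoz, hzm, htop, ?_⟩
  intro B hB
  obtain ⟨R, hRB, hRm⟩ :=
    ((htop.eventually_ge_atTop B).and (eventually_ge_atTop (ρm + 1))).exists
  have hmR : ρm ≤ R := by linarith
  have hBmem : B ∈ Set.Icc (z ρm) (z R) := by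
    rw [Set.mem_Icc, hzm]
    exact ⟨hB.le, hRB⟩
  obtain ⟨ρb, hρbmem, hρbz⟩ :=
    intermediate_value_Icc hmR (hcont.mono Set.Icc_subset_Ici_self) hBmem
  have hρbge : ρm ≤ ρb := hρbmem.1
  have hρbgt : ρm < ρb := by
    rcases eq_or_lt_of_le hρbge with h | h
    · exfalso
      have hb0 : B = 0 := by rw [← hρbz, ← h, hzm]
      linarith
    · exact h
  exact ⟨ρb, ⟨hρbgt, hρbz⟩, fun y hy =>
    hmonoz.injOn (Set.mem_Ici.2 hy.1.le) (Set.mem_Ici.2 hρbge) (hy.2.trans hρbz.symm)⟩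

theorem stmt_18 (γ ρm ρp : ℝ) (hγ1 : 1 ≤ γ) (hγ3 : γ < 3) (hρ : ρp < ρm) (hρp : 0 < ρp)
    (Q : ℝ → ℝ)
    (hQ : ∀ ρ : ℝ, Q ρ = if γ = 1 then 2 * ρ * Real.log ρ - ρ
      else (3 - γ) / (γ - 1) * ρ ^ γ)
    (z : ℝ → ℝ)
    (hz : ∀ ρ₁ : ℝ, z ρ₁ =
      2 * (deriv Q ρ₁ - (Q ρm - Q ρp) / (ρm - ρp)) * (ρ₁ - ρm) * (ρ₁ - ρp) -
      (2 * ρ₁ - ρm - ρp) *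
        (Q ρ₁ - ρ₁ * ((Q ρm - Q ρp) / (ρm - ρp)) + (ρp * Q ρm - ρm * Q ρp) / (ρm - ρp))) :
    StrictMonoOn z (Set.Ici ρm) ∧ z ρm = 0 ∧ Tendsto z atTop atTop ∧
    (∀ B : ℝ, 0 < B → ∃! ρbar : ℝ, ρm < ρbar ∧ z ρbar = B) := by
  by_cases hγ : γ = 1
  · -- γ = 1
    have hQeq : Q = fun ρ => 2 * ρ * Real.log ρ - ρ := by
      funext ρ; rw [hQ ρ, if_pos hγ]
    refine aux18 ρm ρp hρ hρp Q (fun x => 2 * Real.log x + 1) (fun x => 2 * x⁻¹)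
      ?_ ?_ ?_ ?_ z hz
    · intro x hx
      rw [hQeq]
      have h1 : HasDerivAt (fun ρ : ℝ => 2 * (ρ * Real.log ρ) - ρ)
          (2 * (Real.log x + 1) - 1) x :=
        ((Real.hasDerivAt_mul_log hx.ne').const_mul 2).sub (hasDerivAt_id x)
      have heq : (fun ρ : ℝ => 2 * ρ * Real.log ρ - ρ)
          = fun ρ : ℝ => 2 * (ρ * Real.log ρ) - ρ := by
        funext ρ; ring
      rw [heq]
      convert h1 using 1
      ring
    · intro x hx
      have h1 : HasDerivAt (fun y : ℝ => 2 * Real.log y + 1) (2 * x⁻¹) x :=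
        ((Real.hasDerivAt_log hx.ne').const_mul 2).add_const 1
      exact h1
    · intro x hx
      positivity
    · intro a ha b hb hab
      have := Real.log_lt_log ha hab
      simp only
      linarith
  · -- γ > 1
    have hγ' : 1 < γ := lt_of_le_of_ne hγ1 (Ne.symm hγ)
    have hA : 0 < (3 - γ) / (γ - 1) := by
      apply div_pos <;> linarith
    set A : ℝ := (3 - γ) / (γ - 1) with hAdef
    have hQeq : Q = fun ρ => A * ρ ^ γ := by
      funext ρ; rw [hQ ρ, if_neg hγ]
    refine aux18 ρm ρp hρ hρp Q (fun x => A * (γ * x ^ (γ - 1)))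
      (fun x => A * (γ * ((γ - 1) * x ^ (γ - 1 - 1)))) ?_ ?_ ?_ ?_ z hz
    · intro x hx
      rw [hQeq]
      exact (Real.hasDerivAt_rpow_const (Or.inl hx.ne')).const_mul A
    · intro x hx
      exact ((Real.hasDerivAt_rpow_const (p := γ - 1) (Or.inl hx.ne')).const_mul γ).const_mul A
    · intro x hx
      have h1 : (0:ℝ) ≤ x ^ (γ - 1 - 1) := Real.rpow_nonneg hx.le _
      have h2 : (0:ℝ) ≤ γ - 1 := by linarith
      have h3 : (0:ℝ) ≤ γ := by linarith
      positivity
    · intro a ha b hb hab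
      simp only [Set.mem_Ioi] at ha hb
      have h1 : a ^ (γ - 1) < b ^ (γ - 1) :=
        Real.rpow_lt_rpow ha.le hab (by linarith)
      have h2 : 0 < A * γ := by positivity
      simp only
      have h3 : (0:ℝ) ≤ a ^ (γ - 1) := Real.rpow_nonneg ha.le _
      nlinarith
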